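/- Let α > 0 and let m ≥ 1 be an integer. Then m^{α} · ∑_{n=m+1}^∞ n^{−α−1} ≤ 1/α − 1/(2m) + (α+1)/(12m²). -/

import Mathlib

open Real

private noncomputable def g3 (α u : ℝ) : ℝ :=
  (α+1)*(α+2)*(α+3)*(α+4)/12 * (u^2 * (1+u) ^ (-α-5))

private noncomputable def g2 (α u : ℝ) : ℝ :=
  (α+1)/6 - (α+1)/6 * (1+u)^(-α-2) - (α+1)*(α+2)/6 * (u * (1+u)^(-α-3))
    - (α+1)*(α+2)*(α+3)/12 * (u^2 * (1+u)^(-α-4))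

private noncomputable def g1 (α u : ℝ) : ℝ :=
  -(1/2) + (α+1)/6 * u + (1/2) * (1+u)^(-α-1) + (α+1)/3 * (u * (1+u)^(-α-2))
    + (α+1)*(α+2)/12 * (u^2 * (1+u)^(-α-3))

private noncomputable def g0 (α u : ℝ) : ℝ :=
  1/α - (1/2) * u + (α+1)/12 * u^2 - (1/α) * (1+u)^(-α) - (1/2) * (u * (1+u)^(-α-1))
    - (α+1)/12 * (u^2 * (1+u)^(-α-2))

private lemma hasDerivAt_base (c u : ℝ) (hu : 0 < 1 + u) :
    HasDerivAt (fun x : ℝ => (1+x) ^ c) (c * (1+u) ^ (c-1)) u := by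
  have h1 : HasDerivAt (fun x : ℝ => 1 + x) 1 u := (hasDerivAt_id u).const_add 1
  have := (Real.hasDerivAt_rpow_const (x := 1+u) (p := c) (Or.inl hu.ne')).comp u h1
  rw [mul_one] at this
  exact this

private lemma hd2 (α : ℝ) (u : ℝ) (hu : 0 < 1+u) : HasDerivAt (g2 α) (g3 α u) u := by
  have h1 := hasDerivAt_base (-α-2) u hu
  have h2 := hasDerivAt_base (-α-3) u hu
  have h3 := hasDerivAt_base (-α-4) u hu
  rw [show (-α-2-1 : ℝ) = -α-3 by ring] at h1
  rw [show (-α-3-1 : ℝ) = -α-4 by ring] at h2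
  rw [show (-α-4-1 : ℝ) = -α-5 by ring] at h3
  have hid : HasDerivAt (fun x:ℝ => x) 1 u := hasDerivAt_id u
  have hsq : HasDerivAt (fun x:ℝ => x^2) (2*u) u := by simpa using hasDerivAt_pow 2 u
  have H := (((hasDerivAt_const u ((α+1)/6)).sub (h1.const_mul ((α+1)/6))).sub
      ((hid.mul h2).const_mul ((α+1)*(α+2)/6))).sub
      ((hsq.mul h3).const_mul ((α+1)*(α+2)*(α+3)/12))
  convert H using 1
  · rfl
  · rfl
  · rfl
  unfold g3; ring

private lemma hd1 (α : ℝ) (u : ℝ) (hu : 0 < 1+u) : HasDerivAt (g1 α) (g2 α u) u := by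
  have h1 := hasDerivAt_base (-α-1) u hu
  have h2 := hasDerivAt_base (-α-2) u hu
  have h3 := hasDerivAt_base (-α-3) u hu
  rw [show (-α-1-1 : ℝ) = -α-2 by ring] at h1
  rw [show (-α-2-1 : ℝ) = -α-3 by ring] at h2
  rw [show (-α-3-1 : ℝ) = -α-4 by ring] at h3
  have hid : HasDerivAt (fun x:ℝ => x) 1 u := hasDerivAt_id u
  have hsq : HasDerivAt (fun x:ℝ => x^2) (2*u) u := by simpa using hasDerivAt_pow 2 u
  have H := (hasDerivAt_const u (-(1/2):ℝ)) |>.add (hid.const_mul ((α+1)/6))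
      |>.add (h1.const_mul (1/2:ℝ))
      |>.add ((hid.mul h2).const_mul ((α+1)/3))
      |>.add ((hsq.mul h3).const_mul ((α+1)*(α+2)/12))
  convert H using 1
  · rfl
  · rfl
  · rfl
  unfold g2; ring

private lemma hd0 (α : ℝ) (hα : 0 < α) (u : ℝ) (hu : 0 < 1+u) :
    HasDerivAt (g0 α) (g1 α u) u := by
  have h0 := hasDerivAt_base (-α) u hu
  have h1 := hasDerivAt_base (-α-1) u hu
  have h2 := hasDerivAt_base (-α-2) u hu
  rw [show (-α-1 : ℝ) = -α-1 by ring] at h0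
  rw [show (-α-1-1 : ℝ) = -α-2 by ring] at h1
  rw [show (-α-2-1 : ℝ) = -α-3 by ring] at h2
  have hid : HasDerivAt (fun x:ℝ => x) 1 u := hasDerivAt_id u
  have hsq : HasDerivAt (fun x:ℝ => x^2) (2*u) u := by simpa using hasDerivAt_pow 2 u
  have H := (hasDerivAt_const u (1/α)) |>.sub (hid.const_mul (1/2:ℝ))
      |>.add (hsq.const_mul ((α+1)/12))
      |>.sub (h0.const_mul (1/α))
      |>.sub ((hid.mul h1).const_mul (1/2:ℝ))
      |>.sub ((hsq.mul h2).const_mul ((α+1)/12))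
  convert H using 1
  · rfl
  · rfl
  · rfl
  unfold g1
  field_simp
  ring

private lemma g2_nonneg (α : ℝ) (hα : 0 < α) (u : ℝ) (hu : 0 ≤ u) : 0 ≤ g2 α u := by
  have mono : MonotoneOn (g2 α) (Set.Ici (0:ℝ)) := by
    apply monotoneOn_of_deriv_nonneg (convex_Ici 0)
    · intro x hx
      have hx' : (0:ℝ) < 1 + x := by have : (0:ℝ) ≤ x := hx; linarith
      exact (hd2 α x hx').continuousAt.continuousWithinAt
    · intro x hx
      rw [interior_Ici] at hx
      have hx' : (0:ℝ) < 1 + x := by have : (0:ℝ) < x := hx; linarith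
      exact (hd2 α x hx').differentiableAt.differentiableWithinAt
    · intro x hx
      rw [interior_Ici] at hx
      have hx0 : (0:ℝ) < x := hx
      have hx' : (0:ℝ) < 1 + x := by linarith
      rw [(hd2 α x hx').deriv]
      unfold g3
      have := Real.rpow_nonneg (le_of_lt hx') (-α-5)
      positivity
  have h0 : g2 α 0 = 0 := by unfold g2; norm_num
  have := mono Set.self_mem_Ici hu hu
  rwa [h0] at this

private lemma nonneg_aux (f f' : ℝ → ℝ) (hd : ∀ x : ℝ, 0 ≤ x → HasDerivAt f (f' x) x)
    (h0 : f 0 = 0) (hf' : ∀ x : ℝ, 0 ≤ x → 0 ≤ f' x) (u : ℝ) (hu : 0 ≤ u) : 0 ≤ f u := by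
  have mono : MonotoneOn f (Set.Ici (0:ℝ)) := by
    apply monotoneOn_of_deriv_nonneg (convex_Ici 0)
    · exact fun x hx => (hd x hx).continuousAt.continuousWithinAt
    · intro x hx
      rw [interior_Ici] at hx
      exact (hd x (le_of_lt hx)).differentiableAt.differentiableWithinAt
    · intro x hx
      rw [interior_Ici] at hx
      rw [(hd x (le_of_lt hx)).deriv]
      exact hf' x (le_of_lt hx)
  have := mono Set.self_mem_Ici hu hu
  rwa [h0] at this

private lemma g1_nonneg (α : ℝ) (hα : 0 < α) (u : ℝ) (hu : 0 ≤ u) : 0 ≤ g1 α u := by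
  apply nonneg_aux (g1 α) (g2 α) (fun x hx => hd1 α x (by linarith)) ?_ 
    (fun x hx => g2_nonneg α hα x hx) u hu
  unfold g1; norm_num

private lemma g0_nonneg (α : ℝ) (hα : 0 < α) (u : ℝ) (hu : 0 ≤ u) : 0 ≤ g0 α u := by
  apply nonneg_aux (g0 α) (g1 α) (fun x hx => hd0 α hα x (by linarith)) ?_ 
    (fun x hx => g1_nonneg α hα x hx) u hu
  unfold g0
  norm_num

private lemma step (α : ℝ) (hα : 0 < α) (x : ℝ) (hx : 1 ≤ x) :
    (x+1)^(-α-1) ≤ (x^(-α)/α - x^(-α-1)/2 + (α+1)*x^(-α-2)/12)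
      - ((x+1)^(-α)/α - (x+1)^(-α-1)/2 + (α+1)*(x+1)^(-α-2)/12) := by
  have hx0 : (0:ℝ) < x := lt_of_lt_of_le one_pos hx
  have hx1 : (0:ℝ) < x + 1 := by linarith
  have key : 0 ≤ g0 α (1/x) := g0_nonneg α hα (1/x) (by positivity)
  have hpow : (0:ℝ) < x ^ (-α) := Real.rpow_pos_of_pos hx0 _
  have hq : ∀ c : ℝ, (1 + 1/x) ^ c = (x+1)^c / x^c := by
    intro c
    rw [show (1 + 1/x) = (x+1)/x by field_simp, Real.div_rpow hx1.le hx0.le]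
  have ex1 : x ^ (-α-1) = x ^ (-α) * x⁻¹ := by
    rw [show (-α-1 : ℝ) = -α + (-1) by ring, Real.rpow_add hx0, Real.rpow_neg_one]
  have ex2 : x ^ (-α-2) = x ^ (-α) * x⁻¹ * x⁻¹ := by
    rw [show (-α-2 : ℝ) = (-α + (-1)) + (-1) by ring, Real.rpow_add hx0, Real.rpow_add hx0,
      Real.rpow_neg_one]
  have ey1 : (x+1) ^ (-α-1) = (x+1) ^ (-α) * (x+1)⁻¹ := by
    rw [show (-α-1 : ℝ) = -α + (-1) by ring, Real.rpow_add hx1, Real.rpow_neg_one]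
  have ey2 : (x+1) ^ (-α-2) = (x+1) ^ (-α) * (x+1)⁻¹ * (x+1)⁻¹ := by
    rw [show (-α-2 : ℝ) = (-α + (-1)) + (-1) by ring, Real.rpow_add hx1, Real.rpow_add hx1,
      Real.rpow_neg_one]
  have main : ((x^(-α)/α - x^(-α-1)/2 + (α+1)*x^(-α-2)/12)
      - ((x+1)^(-α)/α - (x+1)^(-α-1)/2 + (α+1)*(x+1)^(-α-2)/12)) - (x+1)^(-α-1)
      = x ^ (-α) * g0 α (1/x) := by
    unfold g0
    rw [hq (-α), hq (-α-1), hq (-α-2), ex1, ex2, ey1, ey2]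
    have h1 : x ^ (-α) ≠ 0 := hpow.ne'
    field_simp
    ring
  nlinarith [mul_nonneg hpow.le key]

private noncomputable def hfun (α x : ℝ) : ℝ :=
  x^(-α)/α - x^(-α-1)/2 + (α+1)*x^(-α-2)/12

private lemma hfun_nonneg (α : ℝ) (hα : 0 < α) (x : ℝ) (hx : 1 ≤ x) : 0 ≤ hfun α x := by
  have hx0 : (0:ℝ) < x := by linarith
  have hp : (0:ℝ) < x ^ (-α) := Real.rpow_pos_of_pos hx0 _
  have hq0 : (0:ℝ) < x⁻¹ := by positivity
  have ex1 : x ^ (-α-1) = x ^ (-α) * x⁻¹ := by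
    rw [show (-α-1 : ℝ) = -α + (-1) by ring, Real.rpow_add hx0, Real.rpow_neg_one]
  have ex2 : x ^ (-α-2) = x ^ (-α) * x⁻¹ * x⁻¹ := by
    rw [show (-α-2 : ℝ) = (-α + (-1)) + (-1) by ring, Real.rpow_add hx0, Real.rpow_add hx0,
      Real.rpow_neg_one]
  unfold hfun
  rw [ex1, ex2]
  set p := x ^ (-α)
  set q := x⁻¹
  have h2 : 0 ≤ 12*(α+1)*p - 6*α*(α+1)*(p*q) + α*(α+1)^2*(p*(q*q)) := by
    nlinarith [mul_nonneg (mul_nonneg hα.le hp.le) (sq_nonneg ((α+1)*q - 3)), hp.le, hα.le]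
  have h3 : (0:ℝ) < 12*α*(α+1) := by positivity
  have h4 : 0 ≤ (12*α*(α+1)) * (p/α - p*q/2 + (α+1)*(p*q*q)/12) := by
    have : (12*α*(α+1)) * (p/α - p*q/2 + (α+1)*(p*q*q)/12)
        = 12*(α+1)*p - 6*α*(α+1)*(p*q) + α*(α+1)^2*(p*(q*q)) := by
      field_simp; ring
    rw [this]; exact h2
  exact nonneg_of_mul_nonneg_right h4 h3


/-- For `α > 0` and an integer `m ≥ 1`,
`m^α ∑_{n=m+1}^∞ n^{-α-1} ≤ 1/α - 1/(2m) + (α+1)/(12m²)`, where the tail sum over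
`n > m` is written as `∑_{k≥0} (m+1+k)^{-α-1}`. -/
theorem tail_sum_upper_bound (α : ℝ) (hα : 0 < α) (m : ℕ+) :
    (m : ℝ) ^ α * ∑' k : ℕ, ((m : ℝ) + 1 + (k : ℝ)) ^ (-α - 1)
      ≤ 1/α - 1/(2*(m : ℝ)) + (α + 1)/(12*(m : ℝ)^2) := by
  set M : ℝ := (m : ℝ) with hMdef
  have hM : 1 ≤ M := by
    rw [hMdef]
    exact_mod_cast m.one_le
  have hM0 : (0:ℝ) < M := by linarith
  set f : ℕ → ℝ := fun k => (M + 1 + (k:ℝ)) ^ (-α - 1) with hf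
  set H : ℕ → ℝ := fun k => hfun α (M + (k:ℝ)) with hH
  -- pointwise telescoping bound
  have hstep : ∀ k : ℕ, f k ≤ H k - H (k+1) := by
    intro k
    have hk0 : (0:ℝ) ≤ (k:ℝ) := Nat.cast_nonneg k
    have h1 : (1:ℝ) ≤ M + (k:ℝ) := by linarith
    have := step α hα (M + (k:ℝ)) h1
    simp only [hH, hf]
    have e1 : M + 1 + (k:ℝ) = M + (k:ℝ) + 1 := by ring
    have e2 : M + ((k:ℕ)+1 : ℕ) = M + (k:ℝ) + 1 := by push_cast; ring
    rw [e1, e2]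
    unfold hfun at this ⊢
    exact this
  -- nonnegativity of f and H
  have hfnn : ∀ k : ℕ, 0 ≤ f k := fun k => Real.rpow_nonneg (by positivity) _
  have hHnn : ∀ k : ℕ, 0 ≤ H k := fun k =>
    hfun_nonneg α hα _ (by linarith [Nat.cast_nonneg (α := ℝ) k])
  -- summability
  have hsum : Summable f := by
    have hs1 : Summable (fun n : ℕ => (n:ℝ) ^ (-α-1)) :=
      Real.summable_nat_rpow.mpr (by linarith)
    have hs2 : Summable (fun n : ℕ => ((n+1:ℕ):ℝ) ^ (-α-1)) :=
      (summable_nat_add_iff 1).mpr hs1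
    apply Summable.of_nonneg_of_le hfnn _ hs2
    intro k
    apply Real.rpow_le_rpow_of_nonpos (by positivity) (by push_cast; linarith) (by linarith)
  -- partial sums bounded by H 0
  have hpartial : ∀ N : ℕ, ∑ k ∈ Finset.range N, f k ≤ H 0 := by
    intro N
    calc ∑ k ∈ Finset.range N, f k ≤ ∑ k ∈ Finset.range N, (H k - H (k+1)) :=
          Finset.sum_le_sum (fun k _ => hstep k)
      _ = H 0 - H N := Finset.sum_range_sub' H N
      _ ≤ H 0 := by linarith [hHnn N]
  have htsum : ∑' k : ℕ, f k ≤ H 0 :=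
    le_of_tendsto' hsum.hasSum.tendsto_sum_nat hpartial
  -- final arithmetic
  have hMα : (0:ℝ) < M ^ α := Real.rpow_pos_of_pos hM0 _
  have hmain : M ^ α * ∑' k : ℕ, f k ≤ M ^ α * H 0 := by
    exact mul_le_mul_of_nonneg_left htsum hMα.le
  have hH0 : M ^ α * H 0 = 1/α - 1/(2*M) + (α + 1)/(12*M^2) := by
    have e0 : M ^ α * M ^ (-α) = 1 := by
      rw [← Real.rpow_add hM0]; norm_num
    have e1 : M ^ α * M ^ (-α-1) = M⁻¹ := by
      rw [← Real.rpow_add hM0, show (α + (-α-1)) = (-1:ℝ) by ring, Real.rpow_neg_one]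
    have e2 : M ^ α * M ^ (-α-2) = (M^2)⁻¹ := by
      rw [← Real.rpow_add hM0, show (α + (-α-2)) = -(2:ℝ) by ring, ← Real.rpow_natCast M 2,
        ← Real.rpow_neg hM0.le]
      norm_num
    simp only [hH, Nat.cast_zero, add_zero]
    have expand : M ^ α * hfun α M
        = (M^α*M^(-α))/α - (M^α*M^(-α-1))/2 + (α+1)*(M^α*M^(-α-2))/12 := by
      unfold hfun; ring
    rw [expand, e0, e1, e2]
    field_simp
  calc M ^ α * ∑' k : ℕ, ((m : ℝ) + 1 + (k : ℝ)) ^ (-α - 1) = M ^ α * ∑' k : ℕ, f k := rfl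
    _ ≤ M ^ α * H 0 := hmain
    _ = 1/α - 1/(2*M) + (α + 1)/(12*M^2) := hH0
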